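/- Let E be a quasi-Banach lattice satisfying ‖max_{1≤i≤n}|x_i|‖ ≤ C·max_{|a_i|≤1}‖∑_{i=1}^n a_i x_i‖ for all finite families (x_i) ⊂ E (the K_{∞,1} property with constant C). Then for every quasi-Banach lattice F and every bounded linear operator T: F → E, T is (∞,1)-regular with ρ_{∞,1}(T) ≤ C‖T‖; that is, ‖max_{1≤i≤n}|Tx_i|‖ ≤ C‖T‖·‖∑_{i=1}^n|x_i|‖ for all (x_i)_{i=1}^n ⊂ F. -/

import Mathlib

/-- A quasi-normed lattice structure on a Riesz space `E`. -/
structure QuasiNormLattice (E : Type*) [Lattice E] [AddCommGroup E] [Module ℝ E] where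
  q : E → ℝ
  nonneg : ∀ x, 0 ≤ q x
  eq_zero : ∀ x, q x = 0 → x = 0
  smul : ∀ (c : ℝ) (x : E), q (c • x) = |c| * q x
  quasiAdd : ∃ C : ℝ, 1 ≤ C ∧ ∀ x y, q (x + y) ≤ C * (q x + q y)
  mono : ∀ x y : E, |x| ≤ |y| → q x ≤ q y

/-- If `E` has the `K_{∞,1}` property with constant `C`
(`‖max|x_i|‖ ≤ C·max_{|a_i|≤1}‖∑ a_i x_i‖`), then every bounded linear operator
`T : F → E` from a quasi-Banach lattice `F` (with bound `M`, i.e. `‖Tx‖ ≤ M‖x‖`) is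
`(∞,1)`-regular with constant `C·M`: `‖⋁|T x_i|‖ ≤ C·M·‖∑|x_i|‖`. -/

lemma smul_le_abs_smul_abs {F : Type*} [Lattice F] [AddCommGroup F] [Module ℝ F]
    [CovariantClass F F (· + ·) (· ≤ ·)]
    [PosSMulMono ℝ F] [SMulPosMono ℝ F] (a : ℝ) (x : F) : a • x ≤ |a| • |x| := by
  rcases le_or_gt 0 a with ha | ha
  · exact (smul_le_smul_of_nonneg_left (le_abs_self x) ha).trans
      (smul_le_smul_of_nonneg_right (le_abs_self a) (abs_nonneg x))
  · have h : a • x = (-a) • (-x) := by simp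
    rw [h, abs_of_neg ha]
    exact smul_le_smul_of_nonneg_left (neg_le_abs x) (by linarith)

lemma my_abs_smul_le {F : Type*} [Lattice F] [AddCommGroup F] [Module ℝ F]
    [CovariantClass F F (· + ·) (· ≤ ·)]
    [PosSMulMono ℝ F] [SMulPosMono ℝ F] (a : ℝ) (x : F) : |a • x| ≤ |a| • |x| := by
  refine abs_le'.2 ⟨smul_le_abs_smul_abs a x, ?_⟩
  have h := smul_le_abs_smul_abs (-a) x
  rwa [abs_neg, neg_smul] at h

lemma my_sum_le_sum {F ι : Type*} [Lattice F] [AddCommGroup F]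
    [CovariantClass F F (· + ·) (· ≤ ·)] (s : Finset ι) (f g : ι → F)
    (h : ∀ i ∈ s, f i ≤ g i) : ∑ i ∈ s, f i ≤ ∑ i ∈ s, g i := by
  induction s using Finset.cons_induction with
  | empty => simp
  | cons a s ha ih =>
    simp only [Finset.sum_cons]
    exact add_le_add (h a (Finset.mem_cons_self a s))
      (ih fun i hi => h i (Finset.mem_cons_of_mem hi))

lemma my_abs_sum_le {F ι : Type*} [Lattice F] [AddCommGroup F]
    [CovariantClass F F (· + ·) (· ≤ ·)] (s : Finset ι) (f : ι → F) :
    |∑ i ∈ s, f i| ≤ ∑ i ∈ s, |f i| := by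
  induction s using Finset.cons_induction with
  | empty => simp
  | cons a s ha ih =>
    simp only [Finset.sum_cons]
    exact (abs_add_le _ _).trans (add_le_add_right ih _)

lemma my_sum_nonneg {F ι : Type*} [Lattice F] [AddCommGroup F]
    [CovariantClass F F (· + ·) (· ≤ ·)] (s : Finset ι) (f : ι → F)
    (h : ∀ i ∈ s, 0 ≤ f i) : 0 ≤ ∑ i ∈ s, f i := by
  have := my_sum_le_sum s (fun _ => (0 : F)) f h
  simpa using this

theorem stmt9 {E F : Type*} [Lattice E] [AddCommGroup E] [Module ℝ E]
    [CovariantClass E E (· + ·) (· ≤ ·)]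
    [Lattice F] [AddCommGroup F] [Module ℝ F]
    [CovariantClass F F (· + ·) (· ≤ ·)]
    [PosSMulMono ℝ F] [SMulPosMono ℝ F]
    (QE : QuasiNormLattice E) (QF : QuasiNormLattice F) (C : ℝ)
    (hK : ∀ (n : ℕ) (x : Fin (n + 1) → E) (S : ℝ),
      (∀ a : Fin (n + 1) → ℝ, (∀ i, |a i| ≤ 1) → QE.q (∑ i, a i • x i) ≤ S) →
      QE.q (Finset.univ.sup' Finset.univ_nonempty (fun i => |x i|)) ≤ C * S)
    (T : F →ₗ[ℝ] E) (M : ℝ) (hM : 0 ≤ M)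
    (hT : ∀ x : F, QE.q (T x) ≤ M * QF.q x) :
    ∀ (n : ℕ) (x : Fin (n + 1) → F),
      QE.q (Finset.univ.sup' Finset.univ_nonempty (fun i => |T (x i)|)) ≤
        C * M * QF.q (∑ i, |x i|) := by
  intro n x
  have key : ∀ a : Fin (n + 1) → ℝ, (∀ i, |a i| ≤ 1) →
      QE.q (∑ i, a i • (T (x i))) ≤ M * QF.q (∑ i, |x i|) := by
    intro a ha
    have hsum : T (∑ i, a i • x i) = ∑ i, a i • T (x i) := by
      rw [map_sum]
      exact Finset.sum_congr rfl fun i _ => map_smul T _ _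
    rw [← hsum]
    refine (hT _).trans (mul_le_mul_of_nonneg_left ?_ hM)
    apply QF.mono
    have h1 : |∑ i, a i • x i| ≤ ∑ i, |a i • x i| := my_abs_sum_le _ _
    have h2 : (∑ i, |a i • x i|) ≤ ∑ i, |x i| := by
      refine my_sum_le_sum _ _ _ fun i _ => ?_
      refine (my_abs_smul_le (a i) (x i)).trans ?_
      have h4 : |a i| • |x i| ≤ (1 : ℝ) • |x i| :=
        smul_le_smul_of_nonneg_right (ha i) (abs_nonneg _)
      rwa [one_smul] at h4
    have h3 : |(∑ i, |x i| : F)| = ∑ i, |x i| :=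
      abs_of_nonneg (my_sum_nonneg _ _ fun i _ => abs_nonneg _)
    rw [h3]
    exact h1.trans h2
  have h := hK n (fun i => T (x i)) (M * QF.q (∑ i, |x i|)) key
  rw [mul_assoc]
  exact h
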